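/- Let x, y ∈ ℝⁿ with x ≠ y, and let M : Matrix (Fin n) (Fin n) ℝ be the matrix with entries M i j = 2‖x − y‖⁻⁴ (δ_{ij} − 4(x_i − y_i)(x_j − y_j)‖x − y‖⁻²). Then det M = −3 · 2ⁿ · ‖x − y‖^{−4n}; in particular det M ≠ 0. (This verifies the nondegeneracy condition (A2) for the cost c(x,y) = ‖x−y‖⁻², since M is the matrix of mixed second derivatives D_i D̄_j c(x,y).) -/

import Mathlib

/-- Nondegeneracy (A2) for the cost `c(x,y) = ‖x − y‖⁻²`: the matrix of mixed second
derivatives `M i j = 2‖x − y‖⁻⁴(δ_{ij} − 4(x_i − y_i)(x_j − y_j)‖x − y‖⁻²)` has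
determinant `−3 · 2ⁿ · ‖x − y‖^{−4n} ≠ 0`. -/
theorem det_mixed_hessian_inv_square_cost
    (n : ℕ) (x y : EuclideanSpace ℝ (Fin n)) (hxy : x ≠ y)
    (M : Matrix (Fin n) (Fin n) ℝ)
    (hM : ∀ i j : Fin n,
      M i j = 2 * (‖x - y‖ ^ 4)⁻¹ *
        ((if i = j then (1 : ℝ) else 0) -
          4 * (x i - y i) * (x j - y j) * (‖x - y‖ ^ 2)⁻¹)) :
    M.det = -3 * 2 ^ n * (‖x - y‖ ^ (4 * n))⁻¹ ∧ M.det ≠ 0 := by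
  have hv : ‖x - y‖ ≠ 0 := by
    simp [sub_eq_zero, hxy]
  set v : Fin n → ℝ := fun i => x i - y i with hvdef
  have hnorm : ‖x - y‖ ^ 2 = ∑ i, v i ^ 2 := by
    rw [← Real.sqrt_sq (norm_nonneg (x - y)), Real.sq_sqrt (by positivity)]
    rw [EuclideanSpace.norm_eq]
    rw [Real.sq_sqrt (by positivity)]
    refine Finset.sum_congr rfl fun i _ => ?_
    have : (x - y) i = x i - y i := rfl
    rw [this]
    simp [hvdef, sq_abs]
  set w : Fin n → ℝ := fun i => -4 * (‖x - y‖ ^ 2)⁻¹ * v i with hwdef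
  have hMeq : M = (2 * (‖x - y‖ ^ 4)⁻¹) •
      (1 + Matrix.replicateCol (Fin 1) w * Matrix.replicateRow (Fin 1) v) := by
    ext i j
    have hw : w i * v j = -(4 * (x i - y i) * (x j - y j) * (‖x - y‖ ^ 2)⁻¹) := by
      simp only [hwdef, hvdef]; ring
    rw [hM i j]
    simp only [Matrix.smul_apply, Matrix.add_apply, Matrix.mul_apply, Matrix.replicateCol_apply,
      Matrix.replicateRow_apply, Matrix.one_apply, smul_eq_mul, Finset.sum_const, Finset.card_univ,
      Fintype.card_fin, Finset.univ_unique, Finset.sum_singleton, Finset.card_singleton,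
      Nat.cast_one, hw]
    ring
  have hdet : M.det = (2 * (‖x - y‖ ^ 4)⁻¹) ^ n * (1 + dotProduct v w) := by
    rw [hMeq, Matrix.det_smul, Fintype.card_fin]
    congr 1
    exact Matrix.det_one_add_replicateCol_mul_replicateRow (ι := Fin 1) w v
  have hvw : dotProduct v w = -4 := by
    simp only [dotProduct, hwdef]
    have : ∑ i, v i * (-4 * (‖x - y‖ ^ 2)⁻¹ * v i)
        = -4 * (‖x - y‖ ^ 2)⁻¹ * ∑ i, v i ^ 2 := by
      rw [Finset.mul_sum]; refine Finset.sum_congr rfl fun i _ => by ring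
    rw [this, ← hnorm]
    field_simp
  have hdet2 : M.det = -3 * 2 ^ n * (‖x - y‖ ^ (4 * n))⁻¹ := by
    rw [hdet, hvw]
    have : (‖x - y‖ ^ (4 * n)) = (‖x - y‖ ^ 4) ^ n := by rw [← pow_mul]
    rw [this, mul_pow, ← inv_pow]
    ring
  refine ⟨hdet2, ?_⟩
  rw [hdet2]
  have : (‖x - y‖ ^ (4 * n))⁻¹ ≠ 0 := by positivity
  positivity
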